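/- arXiv:1512.09193 — 2 statements merged into one kernel-verified Lean document; each statement's English description precedes it below -/
import Mathlib

section
/- The contour integral (1/(2πi)) ∮_{|w|=1} dw / (w(z - (pw + q/w))) equals 1/√(z² - 4pq) for real z > p + q = 1 with p, q > 0. -/
open Complex

/-- The contour integral `(1/(2πi)) ∮_{|w|=1} dw / (w (z - (pw + q/w)))` over the
positively oriented unit circle equals `1/√(z² - 4pq)` for real `z > p + q = 1`,
`p, q > 0`. -/
theorem contour_integral_return_gf (p q : ℝ) (hp : 0 < p) (hq : 0 < q) (hpq : p + q = 1)
    (z : ℝ) (hz : 1 < z) :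
    (2 * Real.pi * Complex.I)⁻¹ *
        (∮ w in C(0, 1), 1 / (w * ((z : ℂ) - ((p : ℂ) * w + (q : ℂ) / w))))
      = (1 / Real.sqrt (z ^ 2 - 4 * p * q) : ℝ) := by
  have hΔ : 0 < z ^ 2 - 4 * p * q := by nlinarith [sq_nonneg (p - q)]
  set s : ℝ := Real.sqrt (z ^ 2 - 4 * p * q) with hsdef
  have hs : 0 < s := Real.sqrt_pos.mpr hΔ
  have hs2 : s ^ 2 = z ^ 2 - 4 * p * q := Real.sq_sqrt hΔ.le
  have hsz : s < z := by nlinarith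
  set w₁ : ℝ := (z - s) / (2 * p) with hw1def
  set w₂ : ℝ := (z + s) / (2 * p) with hw2def
  have h2p : (0:ℝ) < 2 * p := by linarith
  have hsq : (z - 2 * p) ^ 2 < s ^ 2 := by nlinarith
  have hw1pos : 0 < w₁ := div_pos (by linarith) h2p
  have hw1lt : w₁ < 1 := by
    rw [hw1def, div_lt_one h2p]; nlinarith
  have hw2gt : 1 < w₂ := by
    rw [hw2def, lt_div_iff₀ h2p]; nlinarith
  have hpC : (p : ℂ) ≠ 0 := by exact_mod_cast hp.ne'
  -- key real identities
  have hsum : p * (w₁ + w₂) = z := by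
    rw [hw1def, hw2def]; field_simp; ring
  have hprod : p * (w₁ * w₂) = q := by
    rw [hw1def, hw2def]; field_simp; nlinarith
  have hsumC : (p : ℂ) * ((w₁ : ℂ) + (w₂ : ℂ)) = (z : ℂ) := by exact_mod_cast hsum
  have hprodC : (p : ℂ) * ((w₁ : ℂ) * (w₂ : ℂ)) = (q : ℂ) := by exact_mod_cast hprod
  set f : ℂ → ℂ := fun w => -((p : ℂ) * (w - (w₂ : ℂ)))⁻¹ with hfdef
  have hW2 : ∀ w : ℂ, w ∈ Metric.closedBall (0:ℂ) 1 → w ≠ (w₂ : ℂ) := by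
    intro w hw hcontra
    rw [Metric.mem_closedBall, dist_zero_right, hcontra] at hw
    rw [Complex.norm_real, Real.norm_eq_abs, abs_le] at hw
    linarith [hw.2]
  have hdiff : DiffContOnCl ℂ f (Metric.ball (0:ℂ) 1) := by
    apply DifferentiableOn.diffContOnCl
    rw [closure_ball (0:ℂ) one_ne_zero]
    intro w hw
    have hne : (p : ℂ) * (w - (w₂ : ℂ)) ≠ 0 :=
      mul_ne_zero hpC (sub_ne_zero.mpr (hW2 w hw))
    have hd : DifferentiableAt ℂ (fun y : ℂ => (p : ℂ) * (y - (w₂ : ℂ))) w := by fun_prop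
    exact (hd.inv hne).neg.differentiableWithinAt
  have hW1mem : (w₁ : ℂ) ∈ Metric.ball (0:ℂ) 1 := by
    rw [Metric.mem_ball, dist_zero_right, Complex.norm_real, Real.norm_eq_abs,
      abs_of_pos hw1pos]
    exact hw1lt
  have hcauchy := hdiff.circleIntegral_sub_inv_smul hW1mem
  have hcong : (∮ w in C((0:ℂ), 1), 1 / (w * ((z : ℂ) - ((p : ℂ) * w + (q : ℂ) / w))))
      = ∮ w in C((0:ℂ), 1), (w - (w₁ : ℂ))⁻¹ • f w := by
    apply circleIntegral.integral_congr zero_le_one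
    intro w hw
    rw [Metric.mem_sphere, dist_zero_right] at hw
    have hw0 : w ≠ 0 := by
      intro h; rw [h] at hw; simp at hw
    have hwne1 : w ≠ (w₁ : ℂ) := by
      intro h; rw [h, Complex.norm_real, Real.norm_eq_abs, abs_of_pos hw1pos] at hw
      linarith
    have hwne2 : w ≠ (w₂ : ℂ) := by
      intro h; rw [h, Complex.norm_real, Real.norm_eq_abs] at hw
      rw [abs_of_pos (by linarith)] at hw; linarith
    have h1 : w - (w₁ : ℂ) ≠ 0 := sub_ne_zero.mpr hwne1
    have h2 : w - (w₂ : ℂ) ≠ 0 := sub_ne_zero.mpr hwne2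
    show 1 / (w * ((z : ℂ) - ((p : ℂ) * w + (q : ℂ) / w)))
        = (w - (w₁ : ℂ))⁻¹ • -((p : ℂ) * (w - (w₂ : ℂ)))⁻¹
    rw [smul_eq_mul]
    have hfact : w * ((z : ℂ) - ((p : ℂ) * w + (q : ℂ) / w))
        = -((p : ℂ) * (w - (w₁ : ℂ)) * (w - (w₂ : ℂ))) := by
      field_simp
      linear_combination (-w) * hsumC + hprodC
    rw [hfact]
    field_simp
  have hfW1 : f (w₁ : ℂ) = ((1 / s : ℝ) : ℂ) := by
    have : (p : ℂ) * ((w₁ : ℂ) - (w₂ : ℂ)) = ((-s : ℝ) : ℂ) := by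
      push_cast
      rw [hw1def, hw2def]
      push_cast
      field_simp
      ring
    rw [hfdef]
    simp only
    rw [this]
    push_cast
    rw [← neg_inv]
    ring_nf
  rw [hcong, hcauchy, hfW1, smul_eq_mul, ← mul_assoc, inv_mul_cancel₀ two_pi_I_ne_zero,
    one_mul]
end

section
/- Let X be a real random variable with moment generating function m_X(t) = E[e^{tX}] finite for all t ≥ 0, and let I(x) = sup_{t>0} (tx - log m_X(t)). Then for i.i.d. copies X_1,…,X_n of X and any x > E[X], P((1/n) Σ_{k=1}^n X_k ≥ x) ≤ e^{-n I(x)}. -/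
open MeasureTheory ProbabilityTheory Real

/-- Chernoff/Cramér upper bound: for i.i.d. real random variables with everywhere-finite
moment generating function (for `t ≥ 0`), and `I(x) = sup_{t>0} (tx - log m_X(t))`,
the probability that the sample mean exceeds `x > E[X]` is at most `e^{-n I(x)}`. -/
theorem cramer_chernoff_upper_bound {Ω : Type*} [MeasurableSpace Ω]
    (μ : Measure Ω) [IsProbabilityMeasure μ]
    (X : ℕ → Ω → ℝ) (hmeas : ∀ i, Measurable (X i))
    (hindep : iIndepFun X μ)
    (hident : ∀ i, IdentDistrib (X i) (X 0) μ μ)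
    (hmgf : ∀ t : ℝ, 0 ≤ t → Integrable (fun ω => Real.exp (t * X 0 ω)) μ)
    (I : ℝ → ℝ)
    (hI : ∀ x : ℝ, I x = ⨆ t : Set.Ioi (0 : ℝ), ((t : ℝ) * x - Real.log (mgf (X 0) μ t)))
    (x : ℝ) (hx : μ[X 0] < x) (n : ℕ) (hn : 0 < n) :
    (μ {ω | x ≤ (∑ k ∈ Finset.range n, X k ω) / n}).toReal ≤ Real.exp (-(n : ℝ) * I x) := by
  set P : ℝ := (μ {ω | x ≤ (∑ k ∈ Finset.range n, X k ω) / n}).toReal with hP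
  have hnpos : (0 : ℝ) < n := Nat.cast_pos.mpr hn
  -- identical distribution of exp(t * X i), mgf equality, integrability
  have hident' : ∀ (t : ℝ) (i : ℕ),
      IdentDistrib (fun ω => Real.exp (t * X i ω)) (fun ω => Real.exp (t * X 0 ω)) μ μ :=
    fun t i => (hident i).comp (measurable_const_mul t).exp
  have hmgfeq : ∀ (t : ℝ) (i : ℕ), mgf (X i) μ t = mgf (X 0) μ t :=
    fun t i => (hident' t i).integral_eq
  have hint : ∀ (t : ℝ), 0 ≤ t → ∀ i : ℕ, Integrable (fun ω => Real.exp (t * X i ω)) μ :=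
    fun t ht i => ((hident' t i).integrable_iff).mpr (hmgf t ht)
  -- event rewrite
  have hev : {ω | x ≤ (∑ k ∈ Finset.range n, X k ω) / n}
      = {ω | (n : ℝ) * x ≤ (∑ k ∈ Finset.range n, X k) ω} := by
    ext ω
    simp only [Set.mem_setOf_eq, Finset.sum_apply]
    rw [le_div_iff₀ hnpos, mul_comm]
  -- Chernoff bound for each t > 0
  have key : ∀ t : ℝ, 0 < t → P ≤ Real.exp (-(n : ℝ) * (t * x - Real.log (mgf (X 0) μ t))) := by
    intro t ht
    have hintS : Integrable (fun ω => Real.exp (t * (∑ k ∈ Finset.range n, X k) ω)) μ :=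
      hindep.integrable_exp_mul_sum hmeas (fun i _ => hint t ht.le i)
    have h1 := measure_ge_le_exp_mul_mgf (μ := μ) (X := ∑ k ∈ Finset.range n, X k)
      ((n : ℝ) * x) ht.le hintS
    have hmgfS : mgf (∑ k ∈ Finset.range n, X k) μ t = (mgf (X 0) μ t) ^ n := by
      rw [hindep.mgf_sum hmeas]
      simp_rw [hmgfeq t]
      simp
    have hpos : 0 < mgf (X 0) μ t := mgf_pos (hmgf t ht.le)
    rw [hP, hev]
    refine h1.trans (le_of_eq ?_)
    rw [hmgfS, ← Real.exp_log (pow_pos hpos n), ← Real.exp_add, Real.log_pow]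
    congr 1
    ring
  -- conclude
  rcases eq_or_lt_of_le (ENNReal.toReal_nonneg : (0:ℝ) ≤ P) with h0 | h0
  · rw [hP, ← h0]; positivity
  · have hP1 : P ≤ 1 := by
      rw [hP]
      exact ENNReal.toReal_le_of_le_ofReal zero_le_one (by simpa using prob_le_one)
    have hlog : Real.log P ≤ 0 := Real.log_nonpos h0.le hP1
    have hIle : I x ≤ -Real.log P / n := by
      rw [hI]
      refine Real.iSup_le (fun t => ?_) (div_nonneg (neg_nonneg.mpr hlog) hnpos.le)
      have hkey := key t t.2
      have hlog2 := Real.log_le_log h0 hkey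
      rw [Real.log_exp] at hlog2
      rw [le_div_iff₀ hnpos]
      nlinarith [hlog2]
    calc P = Real.exp (Real.log P) := (Real.exp_log h0).symm
      _ ≤ Real.exp (-(n : ℝ) * I x) := by
          apply Real.exp_le_exp.mpr
          have := mul_le_mul_of_nonneg_left hIle hnpos.le
          rw [mul_div_cancel₀ _ hnpos.ne'] at this
          linarith
end
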